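/- Let D ⊆ ℤ≥0 be finite with at least two elements. The function φ(x) = x·Set_{D−1}(x)/Set_D(x) is strictly increasing on (0,∞), tends to min(D) as x → 0⁺ and to max(D) as x → ∞; consequently, for every t in the open interval (min(D), max(D)) there is a unique ζ > 0 with φ(ζ) = t. -/
import Mathlib


open Finset

/-- `φ(x) = x·Set_{D−1}(x)/Set_D(x)` where `Set_D(x) = Σ_{d∈D} x^d/d!` and
`Set_{D−1}(x) = Σ_{d∈D, d≥1} x^{d−1}/(d−1)!`. -/
noncomputable def phiD (D : Finset ℕ) (x : ℝ) : ℝ :=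
  x * (∑ d ∈ D.filter (fun d => 1 ≤ d), x ^ (d - 1) / Nat.factorial (d - 1)) /
    ∑ d ∈ D, x ^ d / Nat.factorial d


noncomputable def SD (D : Finset ℕ) (x : ℝ) : ℝ := ∑ d ∈ D, x ^ d / Nat.factorial d
noncomputable def ND (D : Finset ℕ) (x : ℝ) : ℝ := ∑ d ∈ D, (d : ℝ) * (x ^ d / Nat.factorial d)

lemma phi_eq (D : Finset ℕ) (x : ℝ) : phiD D x = ND D x / SD D x := by
  unfold phiD ND SD
  congr 1
  rw [Finset.sum_filter, Finset.mul_sum]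
  refine Finset.sum_congr rfl fun d _ => ?_
  by_cases hd : 1 ≤ d
  · rw [if_pos hd]
    obtain ⟨k, rfl⟩ := Nat.exists_eq_add_of_le hd
    have h1 : 1 + k - 1 = k := by omega
    have h2 : (1 + k).factorial = (1 + k) * k.factorial := by
      rw [Nat.add_comm]; exact Nat.factorial_succ k
    rw [h1, h2]
    have hk : (k.factorial : ℝ) ≠ 0 := Nat.cast_ne_zero.mpr k.factorial_ne_zero
    have hk1 : ((1 + k : ℕ) : ℝ) ≠ 0 := by positivity
    push_cast
    field_simp
    ring
  · rw [if_neg hd]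
    have : d = 0 := by omega
    simp [this]

lemma SD_pos (D : Finset ℕ) (hne : D.Nonempty) {x : ℝ} (hx : 0 < x) : 0 < SD D x :=
  Finset.sum_pos (fun d _ => by positivity) hne

-- the symmetric kernel
noncomputable def FK (x y : ℝ) (d e : ℕ) : ℝ :=
  ((d : ℝ) - e) * (1 / d.factorial) * (1 / e.factorial) * (y ^ d * x ^ e - x ^ d * y ^ e)

lemma cross {x y : ℝ} (hx : 0 < x) (hxy : x < y) {e k : ℕ} (hk : k ≠ 0) :
    x ^ (e + k) * y ^ e < y ^ (e + k) * x ^ e := by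
  have hy : 0 < y := hx.trans hxy
  have h1 : x ^ k < y ^ k := pow_lt_pow_left₀ hxy hx.le hk
  have h2 : (0:ℝ) < (x * y) ^ e := by positivity
  calc x ^ (e + k) * y ^ e = (x * y) ^ e * x ^ k := by rw [pow_add, mul_pow]; ring
    _ < (x * y) ^ e * y ^ k := by exact mul_lt_mul_of_pos_left h1 h2
    _ = y ^ (e + k) * x ^ e := by rw [pow_add, mul_pow]; ring

lemma FK_pos {x y : ℝ} (hx : 0 < x) (hxy : x < y) {d e : ℕ} (hde : e < d) :
    0 < FK x y d e := by
  obtain ⟨k, rfl⟩ : ∃ k, d = e + k := ⟨d - e, by omega⟩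
  have hk : k ≠ 0 := by omega
  have h1 : (0:ℝ) < (↑(e + k) : ℝ) - e := by
    have : (e:ℝ) < ((e+k:ℕ):ℝ) := Nat.cast_lt.mpr hde
    linarith
  have h2 := cross hx hxy (e := e) hk
  have ha : (0:ℝ) < 1 / (e+k).factorial := by positivity
  have hb : (0:ℝ) < 1 / e.factorial := by positivity
  unfold FK
  have : (0:ℝ) < y ^ (e + k) * x ^ e - x ^ (e + k) * y ^ e := by linarith
  positivity

lemma FK_symm (x y : ℝ) (d e : ℕ) : FK x y d e = FK x y e d := by unfold FK; ring

lemma FK_nonneg {x y : ℝ} (hx : 0 < x) (hxy : x < y) (d e : ℕ) : 0 ≤ FK x y d e := by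
  rcases lt_trichotomy d e with h | h | h
  · rw [FK_symm]; exact (FK_pos hx hxy h).le
  · subst h; unfold FK; simp
  · exact (FK_pos hx hxy h).le

lemma mono_core (D : Finset ℕ) (hD : 2 ≤ D.card) {x y : ℝ} (hx : 0 < x) (hxy : x < y) :
    ND D x * SD D y < ND D y * SD D x := by
  have hne : D.Nonempty := Finset.card_pos.mp (by omega)
  -- positivity of the double sum of FK
  have hsum : 0 < ∑ p ∈ D ×ˢ D, FK x y p.1 p.2 := by
    refine Finset.sum_pos' (fun p _ => FK_nonneg hx hxy p.1 p.2) ?_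
    refine ⟨(D.max' hne, D.min' hne), Finset.mk_mem_product (D.max'_mem hne) (D.min'_mem hne), ?_⟩
    exact FK_pos hx hxy (D.min'_lt_max'_of_card (by omega))
  rw [Finset.sum_product] at hsum
  -- swap identity
  have hswap : ∑ d ∈ D, ∑ e ∈ D,
      (e : ℝ) * (1 / d.factorial) * (1 / e.factorial) * (y ^ d * x ^ e - x ^ d * y ^ e)
      = ∑ d ∈ D, ∑ e ∈ D,
      (d : ℝ) * (1 / d.factorial) * (1 / e.factorial) * (x ^ d * y ^ e - y ^ d * x ^ e) := by
    rw [Finset.sum_comm]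
    exact Finset.sum_congr rfl fun d _ => Finset.sum_congr rfl fun e _ => by ring
  -- expand FK in the double sum
  have hFK : ∑ d ∈ D, ∑ e ∈ D, FK x y d e
      = 2 * (∑ d ∈ D, ∑ e ∈ D,
        (d : ℝ) * (1 / d.factorial) * (1 / e.factorial) * (y ^ d * x ^ e - x ^ d * y ^ e)) := by
    have expand : ∀ d e : ℕ, FK x y d e =
        (d : ℝ) * (1 / d.factorial) * (1 / e.factorial) * (y ^ d * x ^ e - x ^ d * y ^ e)
        - (e : ℝ) * (1 / d.factorial) * (1 / e.factorial) * (y ^ d * x ^ e - x ^ d * y ^ e) := by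
      intro d e; unfold FK; ring
    have hneg : ∀ d e : ℕ, (d : ℝ) * (1 / d.factorial) * (1 / e.factorial) * (x ^ d * y ^ e - y ^ d * x ^ e)
        = -((d : ℝ) * (1 / d.factorial) * (1 / e.factorial) * (y ^ d * x ^ e - x ^ d * y ^ e)) :=
      fun d e => by ring
    simp_rw [expand, Finset.sum_sub_distrib, hswap, hneg, Finset.sum_neg_distrib]
    ring
  rw [hFK] at hsum
  have hdiff : ∑ d ∈ D, ∑ e ∈ D,
      (d : ℝ) * (1 / d.factorial) * (1 / e.factorial) * (y ^ d * x ^ e - x ^ d * y ^ e)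
      = ND D y * SD D x - ND D x * SD D y := by
    unfold ND SD
    rw [Finset.sum_mul_sum, Finset.sum_mul_sum, ← Finset.sum_sub_distrib]
    refine Finset.sum_congr rfl fun d _ => ?_
    rw [← Finset.sum_sub_distrib]
    exact Finset.sum_congr rfl fun e _ => by ring
  rw [hdiff] at hsum
  linarith

lemma phi_strictMonoOn (D : Finset ℕ) (hD : 2 ≤ D.card) : StrictMonoOn (phiD D) (Set.Ioi 0) := by
  have hne : D.Nonempty := Finset.card_pos.mp (by omega)
  intro x hx y hy hxy
  rw [Set.mem_Ioi] at hx hy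
  rw [phi_eq, phi_eq, div_lt_div_iff₀ (SD_pos D hne hx) (SD_pos D hne hy)]
  exact mono_core D hD hx hxy

section limits
variable (D : Finset ℕ) (hne : D.Nonempty)

lemma phi_tendsto_zero :
    Filter.Tendsto (phiD D) (nhdsWithin 0 (Set.Ioi 0)) (nhds (D.min' hne : ℝ)) := by
  set m := D.min' hne with hm
  set P : ℝ → ℝ := fun u => ∑ d ∈ D, (d : ℝ) * (1 / d.factorial) * u ^ (d - m) with hP
  set Q : ℝ → ℝ := fun u => ∑ d ∈ D, (1 / (d.factorial : ℝ)) * u ^ (d - m) with hQ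
  have hcontP : Continuous P := continuous_finset_sum _ fun d _ => by continuity
  have hcontQ : Continuous Q := continuous_finset_sum _ fun d _ => by continuity
  have hP0 : P 0 = (m : ℝ) * (1 / m.factorial) := by
    simp only [hP]
    rw [Finset.sum_eq_single_of_mem m (D.min'_mem hne)
      (fun d hd hdm => by
        have : d - m ≠ 0 := by
          have := D.min'_le d hd; omega
        simp [zero_pow this])]
    simp
  have hQ0 : Q 0 = 1 / m.factorial := by
    simp only [hQ]
    rw [Finset.sum_eq_single_of_mem m (D.min'_mem hne)
      (fun d hd hdm => by
        have : d - m ≠ 0 := by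
          have := D.min'_le d hd; omega
        simp [zero_pow this])]
    simp
  have hQ0ne : Q 0 ≠ 0 := by rw [hQ0]; positivity
  have hlim : Filter.Tendsto (fun x => P x / Q x) (nhdsWithin 0 (Set.Ioi 0)) (nhds ((m : ℝ))) := by
    have h := ((hcontP.tendsto 0).div (hcontQ.tendsto 0) hQ0ne).mono_left
      (nhdsWithin_le_nhds (s := Set.Ioi (0:ℝ)))
    have : P 0 / Q 0 = (m : ℝ) := by
      rw [hP0, hQ0]
      have : (m.factorial : ℝ) ≠ 0 := Nat.cast_ne_zero.mpr m.factorial_ne_zero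
      field_simp
    rwa [this] at h
  refine Filter.Tendsto.congr' ?_ hlim
  filter_upwards [self_mem_nhdsWithin] with x hx
  rw [Set.mem_Ioi] at hx
  have hND : ND D x = x ^ m * P x := by
    rw [hP, ND, Finset.mul_sum]
    refine Finset.sum_congr rfl fun d hd => ?_
    have hmd : m ≤ d := D.min'_le d hd
    rw [show x ^ m * ((d : ℝ) * (1 / d.factorial) * x ^ (d - m))
      = (d : ℝ) * (1 / d.factorial) * (x ^ m * x ^ (d - m)) by ring,
      ← pow_add, Nat.add_sub_cancel' hmd]
    ring
  have hSD : SD D x = x ^ m * Q x := by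
    rw [hQ, SD, Finset.mul_sum]
    refine Finset.sum_congr rfl fun d hd => ?_
    have hmd : m ≤ d := D.min'_le d hd
    rw [show x ^ m * ((1 / (d.factorial:ℝ)) * x ^ (d - m))
      = (1 / (d.factorial:ℝ)) * (x ^ m * x ^ (d - m)) by ring,
      ← pow_add, Nat.add_sub_cancel' hmd]
    ring
  rw [phi_eq, hND, hSD, mul_div_mul_left _ _ (pow_ne_zero _ hx.ne')]

lemma phi_tendsto_atTop :
    Filter.Tendsto (phiD D) Filter.atTop (nhds (D.max' hne : ℝ)) := by
  set M := D.max' hne with hM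
  set P : ℝ → ℝ := fun u => ∑ d ∈ D, (d : ℝ) * (1 / d.factorial) * u ^ (M - d) with hP
  set Q : ℝ → ℝ := fun u => ∑ d ∈ D, (1 / (d.factorial : ℝ)) * u ^ (M - d) with hQ
  have hcontP : Continuous P := continuous_finset_sum _ fun d _ => by continuity
  have hcontQ : Continuous Q := continuous_finset_sum _ fun d _ => by continuity
  have hP0 : P 0 = (M : ℝ) * (1 / M.factorial) := by
    simp only [hP]
    rw [Finset.sum_eq_single_of_mem M (D.max'_mem hne)
      (fun d hd hdm => by
        have : M - d ≠ 0 := by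
          have := D.le_max' d hd; omega
        simp [zero_pow this])]
    simp
  have hQ0 : Q 0 = 1 / M.factorial := by
    simp only [hQ]
    rw [Finset.sum_eq_single_of_mem M (D.max'_mem hne)
      (fun d hd hdm => by
        have : M - d ≠ 0 := by
          have := D.le_max' d hd; omega
        simp [zero_pow this])]
    simp
  have hQ0ne : Q 0 ≠ 0 := by rw [hQ0]; positivity
  have hinv : Filter.Tendsto (fun x : ℝ => x⁻¹) Filter.atTop (nhds 0) :=
    tendsto_inv_atTop_zero
  have hlim : Filter.Tendsto (fun x : ℝ => P x⁻¹ / Q x⁻¹) Filter.atTop (nhds ((M : ℝ))) := by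
    have h := ((hcontP.tendsto 0).comp hinv).div ((hcontQ.tendsto 0).comp hinv) hQ0ne
    have heq : P 0 / Q 0 = (M : ℝ) := by
      rw [hP0, hQ0]
      have : (M.factorial : ℝ) ≠ 0 := Nat.cast_ne_zero.mpr M.factorial_ne_zero
      field_simp
    rwa [heq] at h
  refine Filter.Tendsto.congr' ?_ hlim
  filter_upwards [Filter.eventually_gt_atTop 0] with x hx
  have key : ∀ d ∈ D, x ^ M * (x⁻¹) ^ (M - d) = x ^ d := by
    intro d hd
    have hdM : d ≤ M := D.le_max' d hd
    have hxd : x ^ d * x ^ (M - d) = x ^ M := by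
      rw [← pow_add, Nat.add_sub_cancel' hdM]
    rw [inv_pow, ← hxd, mul_assoc, mul_inv_cancel₀ (by positivity), mul_one]
  have hND : ND D x = x ^ M * P x⁻¹ := by
    rw [hP, ND, Finset.mul_sum]
    refine Finset.sum_congr rfl fun d hd => ?_
    rw [show x ^ M * ((d : ℝ) * (1 / d.factorial) * (x⁻¹) ^ (M - d))
      = (d : ℝ) * (1 / d.factorial) * (x ^ M * (x⁻¹) ^ (M - d)) by ring, key d hd]
    ring
  have hSD : SD D x = x ^ M * Q x⁻¹ := by
    rw [hQ, SD, Finset.mul_sum]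
    refine Finset.sum_congr rfl fun d hd => ?_
    rw [show x ^ M * ((1 / (d.factorial:ℝ)) * (x⁻¹) ^ (M - d))
      = (1 / (d.factorial:ℝ)) * (x ^ M * (x⁻¹) ^ (M - d)) by ring, key d hd]
    ring
  rw [phi_eq, hND, hSD, mul_div_mul_left _ _ (pow_ne_zero _ hx.ne')]

end limits

/-- For finite `D` with at least two elements, `φ` is strictly increasing on `(0,∞)`,
tends to `min D` as `x → 0⁺` and to `max D` as `x → ∞`; hence for every
`t ∈ (min D, max D)` there is a unique `ζ > 0` with `φ(ζ) = t`. -/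
theorem phiD_strictMono_and_limits (D : Finset ℕ) (hne : D.Nonempty) (hD : 2 ≤ D.card) :
    StrictMonoOn (phiD D) (Set.Ioi 0) ∧
    Filter.Tendsto (phiD D) (nhdsWithin 0 (Set.Ioi 0)) (nhds (D.min' hne : ℝ)) ∧
    Filter.Tendsto (phiD D) Filter.atTop (nhds (D.max' hne : ℝ)) ∧
    ∀ t : ℝ, (D.min' hne : ℝ) < t → t < (D.max' hne : ℝ) →
      ∃! ζ : ℝ, 0 < ζ ∧ phiD D ζ = t := by
  have hmono := phi_strictMonoOn D hD
  refine ⟨hmono, phi_tendsto_zero D hne, phi_tendsto_atTop D hne, ?_⟩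
  intro t hmt htM
  have h0 : ∀ᶠ x in nhdsWithin 0 (Set.Ioi 0), phiD D x < t :=
    (phi_tendsto_zero D hne).eventually_lt_const hmt
  obtain ⟨x₀, hx₀t, hx₀pos⟩ := (h0.and self_mem_nhdsWithin).exists
  have h1 : ∀ᶠ x in Filter.atTop, t < phiD D x :=
    (phi_tendsto_atTop D hne).eventually_const_lt htM
  obtain ⟨x₁, hx₁t, hx₁pos⟩ := (h1.and (Filter.eventually_gt_atTop 0)).exists
  have hx01 : x₀ < x₁ := by
    by_contra h
    push_neg at h
    rcases eq_or_lt_of_le h with h' | h'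
    · rw [h'] at hx₁t; linarith
    · have := hmono (Set.mem_Ioi.mpr hx₁pos) (Set.mem_Ioi.mpr hx₀pos) h'
      linarith
  have hsub : Set.Icc x₀ x₁ ⊆ Set.Ioi 0 := fun z hz => lt_of_lt_of_le hx₀pos hz.1
  have hfun : phiD D = fun x => ND D x / SD D x := funext (phi_eq D)
  have hcont : ContinuousOn (phiD D) (Set.Icc x₀ x₁) := by
    rw [hfun]
    refine ContinuousOn.div ?_ ?_ (fun z hz => (SD_pos D hne (hsub hz)).ne')
    · exact (continuous_finset_sum _ fun d _ => by continuity : Continuous (ND D)).continuousOn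
    · exact (continuous_finset_sum _ fun d _ => by continuity : Continuous (SD D)).continuousOn
  obtain ⟨ζ, hζmem, hζ⟩ := intermediate_value_Icc hx01.le hcont ⟨hx₀t.le, hx₁t.le⟩
  have hζpos : 0 < ζ := hsub hζmem
  refine ⟨ζ, ⟨hζpos, hζ⟩, ?_⟩
  rintro y ⟨hypos, hyt⟩
  exact hmono.injOn (Set.mem_Ioi.mpr hypos) (Set.mem_Ioi.mpr hζpos) (hyt.trans hζ.symm)
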